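/- Let r be a prime, let c be a unit of ZMod r with c ≠ 1, and let a, b ∈ ZMod r. Then there exists an r×r integer matrix X indexed by ZMod r such that S·X − X·S = S^a·P_c − S^b·P_c. -/

import Mathlib

/-- The matrix `S^t` for `t ∈ ZMod r`: `(S^t) i j = 1` if `i = j − t` and `0` otherwise. -/
def Smat (r : ℕ) (t : ZMod r) : Matrix (ZMod r) (ZMod r) ℤ :=
  Matrix.of fun i j => if i = j - t then 1 else 0

/-- The matrix `P_α` for a unit `α` of `ZMod r`: `(P_α) i j = 1` if `i = α·j` and `0` otherwise. -/
def Pmat (r : ℕ) (a : ZMod r) : Matrix (ZMod r) (ZMod r) ℤ :=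
  Matrix.of fun i j => if i = a * j then 1 else 0

lemma Smat_mul_Smat (r : ℕ) [NeZero r] (s t : ZMod r) : Smat r s * Smat r t = Smat r (s + t) := by
  ext i j
  simp only [Smat, Matrix.mul_apply, Matrix.of_apply]
  rw [Finset.sum_eq_single (j - t)]
  · simp [sub_sub, add_comm]
  · intro k _ hk; simp [hk]
  · simp

lemma Pmat_mul_Smat (r : ℕ) [NeZero r] (c t : ZMod r) :
    Pmat r c * Smat r t = Smat r (c * t) * Pmat r c := by
  ext i j
  simp only [Pmat, Smat, Matrix.mul_apply, Matrix.of_apply]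
  rw [Finset.sum_eq_single (j - t), Finset.sum_eq_single (c * j)]
  · simp [mul_sub]
  · intro k _ hk; simp [hk]
  · simp
  · intro k _ hk; simp [hk]
  · simp

theorem stmt_12 (r : ℕ) [NeZero r] (hr : r.Prime) (c : (ZMod r)ˣ)
    (hc : (c : ZMod r) ≠ 1) (a b : ZMod r) :
    ∃ X : Matrix (ZMod r) (ZMod r) ℤ,
      Smat r 1 * X - X * Smat r 1
        = Smat r a * Pmat r (c : ZMod r) - Smat r b * Pmat r (c : ZMod r) := by
  haveI := Fact.mk hr
  set e : ZMod r := (c : ZMod r) - 1 with he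
  have he0 : e ≠ 0 := sub_ne_zero.mpr hc
  set n : ℕ := ((b - a) * e⁻¹).val with hn
  have hne : a + (n : ZMod r) * e = b := by
    rw [hn]
    rw [ZMod.natCast_val, ZMod.cast_id]
    field_simp
    ring
  refine ⟨∑ k ∈ Finset.range n,
      Smat r (a + (k : ZMod r) * e - 1) * Pmat r (c : ZMod r), ?_⟩
  rw [Finset.mul_sum, Finset.sum_mul, ← Finset.sum_sub_distrib]
  have key : ∀ k : ℕ,
      Smat r 1 * (Smat r (a + (k : ZMod r) * e - 1) * Pmat r (c : ZMod r))
        - Smat r (a + (k : ZMod r) * e - 1) * Pmat r (c : ZMod r) * Smat r 1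
      = Smat r (a + (k : ZMod r) * e) * Pmat r (c : ZMod r)
        - Smat r (a + ((k + 1 : ℕ) : ZMod r) * e) * Pmat r (c : ZMod r) := by
    intro k
    rw [← mul_assoc, Smat_mul_Smat, mul_assoc, Pmat_mul_Smat, ← mul_assoc, Smat_mul_Smat]
    congr 2
    · ring
    · push_cast
      rw [he]
      ring
  rw [Finset.sum_congr rfl (fun k _ => key k), Finset.sum_range_sub'
    (f := fun k => Smat r (a + (k : ZMod r) * e) * Pmat r (c : ZMod r))]
  rw [hne]
  norm_num
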